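/- Let γ > 0, b > 0, p > 0, p₂ ≥ p, q_max > b + p/γ. The consumer's overall optimal actual consumption satisfies: if not called (r=0) and 0 ≤ p_r ≤ p/(p₂+p), then q* = b + p_r·p₂/(γ(1-p_r)); if not called and p_r ≥ p/(p₂+p), then q* = b + p/γ; if called (r=1), then q* = max(b - p₂/γ, 0) for all p_r ∈ [0,1]. -/

import Mathlib

open Set

private lemma aux1 (γ b p qmax : ℝ) (hγ : 0 < γ) (hp : 0 < p)
    (hqmax : b + p / γ < qmax)
    (G : ℝ → ℝ)
    (hG : ∀ q, G q = if q ≤ b + p / γ then -γ/2 * q^2 + (γ*b + p) * q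
                     else p^2/(2*γ) + γ*b^2/2 + p*b)
    (s : ℝ) (hs0 : 0 ≤ s) (hsp : γ * s ≤ p) :
    IsMaxOn (fun q => G q - p * max (b+s) q) (Set.Icc 0 qmax) (b+s) := by
  obtain ⟨P, hP, rfl⟩ : ∃ P, 0 < P ∧ p = γ * P := ⟨p/γ, div_pos hp hγ, by field_simp⟩
  rw [mul_div_cancel_left₀ _ hγ.ne'] at hqmax hG
  rw [show (γ*P)^2/(2*γ) = γ*P^2/2 by field_simp] at hG
  have hsP : s ≤ P := le_of_mul_le_mul_left hsp hγ
  rw [isMaxOn_iff]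
  intro x hx
  simp only [Set.mem_Icc] at hx
  show G x - γ*P * max (b+s) x ≤ G (b+s) - γ*P * max (b+s) (b+s)
  rw [max_self, hG (b+s), if_pos (by linarith : b+s ≤ b+P), hG x]
  rcases le_or_gt x (b+s) with h1 | h1
  · rw [max_eq_left h1, if_pos (by linarith : x ≤ b+P)]
    nlinarith [mul_nonneg (by linarith : (0:ℝ) ≤ b+s-x) (by nlinarith : (0:ℝ) ≤ γ*P - γ*s),
      mul_nonneg (mul_nonneg hγ.le (by linarith : (0:ℝ) ≤ b+s-x)) (by linarith : (0:ℝ) ≤ b+s-x)]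
  · rw [max_eq_right h1.le]
    rcases le_or_gt x (b+P) with h2 | h2
    · rw [if_pos h2]
      nlinarith [mul_nonneg (mul_nonneg hγ.le (by linarith : (0:ℝ) ≤ x-(b+s))) (by linarith : (0:ℝ) ≤ x-(b+s)),
        mul_nonneg (mul_nonneg hγ.le (by linarith : (0:ℝ) ≤ x-(b+s))) hs0]
    · rw [if_neg (not_le.2 h2)]
      nlinarith [mul_nonneg (mul_nonneg hγ.le hP.le) (by linarith : (0:ℝ) ≤ x-(b+P)),
        mul_nonneg (mul_nonneg hγ.le (by linarith : (0:ℝ) ≤ P - s)) (by linarith : (0:ℝ) ≤ P + s)]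

set_option maxHeartbeats 1600000 in
/-- overall optimal actual consumption, combining first-stage optimal
reports with second-stage optimal responses. -/
theorem stmt11 (γ b p p₂ qmax pr : ℝ) (hγ : 0 < γ) (hb : 0 < b) (hp : 0 < p)
    (hp₂ : p ≤ p₂) (hqmax : b + p / γ < qmax) (hpr : pr ∈ Set.Icc (0:ℝ) 1)
    (G : ℝ → ℝ)
    (hG : ∀ q, G q = if q ≤ b + p / γ then -γ/2 * q^2 + (γ*b + p) * q
                     else p^2/(2*γ) + γ*b^2/2 + p*b)
    (bhatstar : ℝ)
    (hbhatstar : bhatstar = if pr ≤ p/(p₂+p) then b + pr*p₂/(γ*(1-pr)) else qmax) :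
    (pr ≤ p/(p₂+p) →
      IsMaxOn (fun q => G q - p * max bhatstar q) (Set.Icc 0 qmax)
        (b + pr*p₂/(γ*(1-pr)))) ∧
    (p/(p₂+p) ≤ pr →
      IsMaxOn (fun q => G q - p * max bhatstar q) (Set.Icc 0 qmax) (b + p/γ)) ∧
    IsMaxOn
      (fun q => G q - (p*q - p₂ * max (bhatstar - q) 0 + p₂ * |q - max (b - p₂/γ) 0|))
      (Set.Icc 0 qmax) (max (b - p₂/γ) 0) := by
  have hp₂pos : 0 < p₂ := lt_of_lt_of_le hp hp₂
  have hsum : 0 < p₂ + p := by linarith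
  refine ⟨?_, ?_, ?_⟩
  · -- Part 1
    intro h1
    have hpr1 : pr < 1 := lt_of_le_of_lt h1 (by rw [div_lt_one hsum]; linarith)
    have h1pr : 0 < 1 - pr := by linarith
    have hmul : pr * (p₂ + p) ≤ p := (le_div_iff₀ hsum).mp h1
    have hs0 : 0 ≤ pr*p₂/(γ*(1-pr)) :=
      div_nonneg (mul_nonneg hpr.1 hp₂pos.le) (mul_nonneg hγ.le h1pr.le)
    have hsp : γ * (pr*p₂/(γ*(1-pr))) ≤ p := by
      have hγs : γ * (pr*p₂/(γ*(1-pr))) = pr*p₂/(1-pr) := by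
        field_simp
      rw [hγs, div_le_iff₀ h1pr]; nlinarith
    rw [hbhatstar, if_pos h1]
    exact aux1 γ b p qmax hγ hp hqmax G hG _ hs0 hsp
  · -- Part 2
    intro h2
    by_cases hc : pr ≤ p/(p₂+p)
    · have hpre : pr = p/(p₂+p) := le_antisymm hc h2
      have hseq : pr*p₂/(γ*(1-pr)) = p/γ := by
        rw [hpre]; field_simp [hp₂pos.ne']; ring
      rw [hbhatstar, if_pos hc, hseq]
      exact aux1 γ b p qmax hγ hp hqmax G hG _ (by positivity)
        (le_of_eq (by field_simp))
    · rw [hbhatstar, if_neg hc]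
      rw [isMaxOn_iff]
      intro x hx
      simp only [Set.mem_Icc] at hx
      have hbP : 0 < p/γ := div_pos hp hγ
      show G x - p * max qmax x ≤ G (b+p/γ) - p * max qmax (b+p/γ)
      rw [max_eq_left hx.2, max_eq_left (by linarith : b+p/γ ≤ qmax),
        hG (b+p/γ), if_pos le_rfl, hG x]
      have h2' : γ*(b+p/γ) = γ*b + p := by field_simp
      rcases le_or_gt x (b+p/γ) with h | h
      · rw [if_pos h, show γ*b+p = γ*(b+p/γ) from h2'.symm]
        nlinarith [mul_nonneg hγ.le (sq_nonneg ((b+p/γ) - x))]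
      · rw [if_neg (not_le.2 h)]
        have : p^2/(2*γ) + γ*b^2/2 + p*b = -γ/2*(b+p/γ)^2 + (γ*b+p)*(b+p/γ) := by
          field_simp; ring
        linarith [this.le]
  · -- Part 3
    have hbc : b ≤ bhatstar := by
      rw [hbhatstar]; split_ifs with h
      · have h1' : 0 ≤ pr*p₂/(γ*(1-pr)) :=
          div_nonneg (mul_nonneg hpr.1 hp₂pos.le) (mul_nonneg hγ.le (by linarith [hpr.2]))
        linarith
      · have : 0 < p/γ := div_pos hp hγ
        linarith
    clear hbhatstar
    obtain ⟨P, hP, rfl⟩ : ∃ P, 0 < P ∧ p = γ * P := ⟨p/γ, div_pos hp hγ, by field_simp⟩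
    obtain ⟨P₂, hP₂, rfl⟩ : ∃ P₂, 0 < P₂ ∧ p₂ = γ * P₂ :=
      ⟨p₂/γ, div_pos hp₂pos hγ, by field_simp⟩
    rw [mul_div_cancel_left₀ _ hγ.ne'] at hqmax hG
    rw [show (γ*P)^2/(2*γ) = γ*P^2/2 by field_simp] at hG
    have hPP₂ : P ≤ P₂ := le_of_mul_le_mul_left hp₂ hγ
    simp only [mul_div_cancel_left₀ _ hγ.ne']
    rw [isMaxOn_iff]
    intro x hx
    simp only [Set.mem_Icc] at hx
    have ht0 : 0 ≤ max (b - P₂) 0 := le_max_right _ _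
    have htP : b - P₂ ≤ max (b - P₂) 0 := le_max_left _ _
    have htb : max (b - P₂) 0 ≤ b := max_le (by linarith) hb.le
    set t := max (b - P₂) 0 with htdef
    have hγt : γ*b - γ*P₂ ≤ γ*t := by
      have := mul_le_mul_of_nonneg_left htP hγ.le; nlinarith
    show G x - (γ*P*x - γ*P₂ * max (bhatstar - x) 0 + γ*P₂ * |x - t|)
        ≤ G t - (γ*P*t - γ*P₂ * max (bhatstar - t) 0 + γ*P₂ * |t - t|)
    rw [sub_self, abs_zero, mul_zero, max_eq_left (by linarith : (0:ℝ) ≤ bhatstar - t),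
      hG t, if_pos (by linarith : t ≤ b+P)]
    rcases le_or_gt x t with hxt | hxt
    · -- x ≤ t
      rw [abs_of_nonpos (by linarith), hG x, if_pos (by linarith : x ≤ b+P),
        max_eq_left (by linarith : (0:ℝ) ≤ bhatstar - x)]
      nlinarith [mul_nonneg (by linarith : (0:ℝ) ≤ t-x)
        (mul_nonneg hγ.le (by linarith : (0:ℝ) ≤ 2*b-t-x))]
    · -- t < x
      have hγx : γ*t ≤ γ*x := mul_le_mul_of_nonneg_left hxt.le hγ.le
      rw [abs_of_nonneg (by linarith), hG x]
      rcases le_or_gt x bhatstar with hxc | hxc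
      · rw [max_eq_left (by linarith : (0:ℝ) ≤ bhatstar - x)]
        rcases le_or_gt x (b+P) with hxP | hxP
        · rw [if_pos hxP]
          nlinarith [mul_nonneg (by linarith : (0:ℝ) ≤ x-t)
            (by linarith : (0:ℝ) ≤ γ*x + γ*t - 2*γ*b + 4*γ*P₂)]
        · rw [if_neg (not_le.2 hxP)]
          nlinarith [mul_nonneg (mul_nonneg hγ.le hP.le) (by linarith : (0:ℝ) ≤ x-(b+P)),
            mul_nonneg (mul_nonneg hγ.le hP₂.le) (by linarith : (0:ℝ) ≤ x-(b+P)),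
            mul_nonneg (by linarith : (0:ℝ) ≤ b-t) (by linarith : (0:ℝ) ≤ γ*P₂ - γ*b + γ*t),
            mul_nonneg (mul_nonneg hγ.le hP₂.le) hP.le,
            mul_nonneg (mul_nonneg hγ.le hP₂.le) (by linarith : (0:ℝ) ≤ b-t)]
      · rw [max_eq_right (by linarith : bhatstar - x ≤ 0)]
        rcases le_or_gt x (b+P) with hxP | hxP
        · rw [if_pos hxP]
          nlinarith [mul_nonneg (by linarith : (0:ℝ) ≤ x-t)
            (by linarith : (0:ℝ) ≤ γ*x + γ*t - 2*γ*b + 2*γ*P₂),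
            mul_nonneg (mul_nonneg hγ.le hP₂.le) (by linarith : (0:ℝ) ≤ bhatstar - t)]
        · rw [if_neg (not_le.2 hxP)]
          nlinarith [mul_nonneg (mul_nonneg hγ.le hP.le) (by linarith : (0:ℝ) ≤ x-(b+P)),
            mul_nonneg (mul_nonneg hγ.le hP₂.le) (by linarith : (0:ℝ) ≤ x - bhatstar),
            mul_nonneg (by linarith : (0:ℝ) ≤ b-t) (by linarith : (0:ℝ) ≤ γ*P₂ - γ*b + γ*t),
            mul_nonneg (mul_nonneg hγ.le hP₂.le) (by linarith : (0:ℝ) ≤ bhatstar - b),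
            mul_nonneg (mul_nonneg hγ.le hP.le) hP.le]
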